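/- Let q, r be elements of the positive cone R_τ⁺ of R_τ with r ≠ 0. Then there exist unique p, s ∈ R_τ⁺ with q = p·r + s and s < r (in the ordering of R_τ inherited from orderings of ℚ[x] by eventual sign). -/

import Mathlib

open Polynomial

section padics
variable {p : ℕ} [hp : Fact p.Prime]

lemma aeval_coe_int (t : ℤ_[p]) (h : Polynomial ℤ) :
    aeval ((t : ℚ_[p])) (h.map (algebraMap ℤ ℚ)) = ((aeval t h : ℤ_[p]) : ℚ_[p]) := by
  rw [aeval_map_algebraMap]
  exact (Polynomial.aeval_algHom_apply (PadicInt.Coe.ringHom (p := p)).toIntAlgHom t h)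

lemma norm_nat_eq (n : ℕ) (hn : n ≠ 0) :
    ‖((n : ℚ) : ℚ_[p])‖ = (p : ℝ) ^ (-(n.factorization p : ℤ)) := by
  rw [Padic.eq_padicNorm,
    padicNorm.eq_zpow_of_nonzero (by exact_mod_cast hn)]
  have : padicValRat p (n : ℚ) = (n.factorization p : ℤ) := by
    rw [padicValRat.of_nat, Nat.factorization_def _ hp.out]
  rw [this]
  push_cast
  ring_nf

lemma approx_rat (x : ℚ_[p]) (e : ℕ) (hx : ‖x‖ ≤ (p : ℝ) ^ (e : ℤ)) :
    ∃ a : ℤ, ‖x - (((a : ℚ) / (p ^ e : ℚ) : ℚ) : ℚ_[p])‖ ≤ 1 := by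
  have hpe : ((p : ℚ_[p]) ^ e) ≠ 0 := by
    exact pow_ne_zero _ (Nat.cast_ne_zero.mpr hp.out.ne_zero)
  have hz : ‖x * (p : ℚ_[p]) ^ e‖ ≤ 1 := by
    rw [norm_mul, Padic.norm_p_pow]
    calc ‖x‖ * (p:ℝ) ^ (-e : ℤ) ≤ (p:ℝ) ^ (e:ℤ) * (p:ℝ) ^ (-e:ℤ) := by
          apply mul_le_mul_of_nonneg_right hx (zpow_nonneg (by positivity) _)
      _ = 1 := by
          rw [← zpow_add₀ (by exact_mod_cast hp.out.ne_zero : (p:ℝ) ≠ 0)]; simp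
  set y : ℤ_[p] := ⟨x * (p : ℚ_[p]) ^ e, hz⟩ with hy
  refine ⟨(y.appr e : ℤ), ?_⟩
  have hspec := PadicInt.appr_spec e y
  rw [Ideal.mem_span_singleton] at hspec
  obtain ⟨u, hu⟩ := hspec
  have hcoe : ((y - (y.appr e : ℤ_[p]) : ℤ_[p]) : ℚ_[p]) = ((p : ℚ_[p]) ^ e) * (u : ℚ_[p]) := by
    rw [hu]; push_cast; ring
  have hyx : ((y : ℚ_[p])) = x * (p : ℚ_[p]) ^ e := rfl
  have hcoe2 : x * (p:ℚ_[p]) ^ e - ((y.appr e : ℕ) : ℚ_[p]) = ((p : ℚ_[p]) ^ e) * (u : ℚ_[p]) := by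
    rw [← hyx]; exact_mod_cast hcoe
  have key : x - (((y.appr e : ℤ) : ℚ) / (p ^ e : ℚ) : ℚ) = (u : ℚ_[p]) := by
    push_cast
    field_simp
    linear_combination hcoe2
  rw [key]
  exact PadicInt.norm_le_one u

lemma norm_sub_le_max (x y : ℚ_[p]) : ‖x - y‖ ≤ max ‖x‖ ‖y‖ := by
  have := Padic.nonarchimedean x (-y)
  simpa [sub_eq_add_neg] using this

lemma norm_rat_div_le_one (a : ℤ) (b : ℕ) (hb : ¬ (p ∣ b)) :
    ‖(((a : ℚ) / (b : ℚ)) : ℚ_[p])‖ ≤ 1 := by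
  have hb1 : ‖((b : ℤ) : ℚ_[p])‖ = 1 := by
    refine le_antisymm (Padic.norm_int_le_one _) ?_
    by_contra hlt
    push_neg at hlt
    rw [Padic.norm_intCast_lt_one_iff] at hlt
    exact hb (by exact_mod_cast hlt)
  push_cast
  rw [norm_div]
  push_cast at hb1
  rw [hb1]
  simpa using Padic.norm_int_le_one (p := p) a

lemma norm_rat_sum_le_one {α : Type*} (s : Finset α) (g : α → ℚ)
    (hg : ∀ x ∈ s, ‖((g x : ℚ) : ℚ_[p])‖ ≤ 1) :
    ‖((∑ x ∈ s, g x : ℚ) : ℚ_[p])‖ ≤ 1 := by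
  rw [Rat.cast_sum]
  refine Finset.sum_induction _ (fun y : ℚ_[p] => ‖y‖ ≤ 1) (fun a b ha hb => ?_) (by simp) hg
  exact le_trans (Padic.nonarchimedean a b) (max_le ha hb)

end padics

/-- The subset `R_τ` of `ℚ[X]`: quotients `h/n` with `h ∈ ℤ[X]`, `n` a positive integer,
such that for every prime `p` the evaluation `h(τ_p)` in the `p`-adic integers is divisible
by `p ^ v_p(n)`. -/
def RtauSet (τ : ∀ p : {p : ℕ // p.Prime}, @PadicInt p.1 ⟨p.2⟩) : Set (Polynomial ℚ) :=
  {f | ∃ (h : Polynomial ℤ) (n : ℕ), n ≠ 0 ∧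
    Polynomial.C (n : ℚ) * f = h.map (algebraMap ℤ ℚ) ∧
    ∀ p : {p : ℕ // p.Prime},
      letI : Fact p.1.Prime := ⟨p.2⟩
      ((p.1 : @PadicInt p.1 ⟨p.2⟩) ^ (n.factorization p.1)) ∣ Polynomial.aeval (τ p) h}

noncomputable def EV (τ : ∀ p : {p : ℕ // p.Prime}, @PadicInt p.1 ⟨p.2⟩)
    (p : {p : ℕ // p.Prime}) (f : Polynomial ℚ) : @Padic p.1 ⟨p.2⟩ :=
  letI : Fact p.1.Prime := ⟨p.2⟩
  aeval ((τ p : ℚ_[p.1])) f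

lemma exists_clear (f : Polynomial ℚ) :
    ∃ (n : ℕ) (h : Polynomial ℤ), n ≠ 0 ∧ C (n : ℚ) * f = h.map (algebraMap ℤ ℚ) := by
  induction f using Polynomial.induction_on' with
  | monomial k a =>
      refine ⟨a.den, monomial k a.num, a.den_nz, ?_⟩
      rw [Polynomial.map_monomial, C_mul_monomial]
      congr 1
      · rw [mul_comm]
        exact_mod_cast Rat.mul_den_eq_num a
  | add f g hf hg =>
      obtain ⟨n, h, hn, hfe⟩ := hf
      obtain ⟨m, k, hm, hge⟩ := hg
      refine ⟨n * m, C (m : ℤ) * h + C (n : ℤ) * k, mul_ne_zero hn hm, ?_⟩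
      rw [Polynomial.map_add, Polynomial.map_mul, Polynomial.map_mul, ← hfe, ← hge,
        map_C, map_C]
      push_cast
      rw [C_mul]
      ring

lemma mem_RtauSet_iff (τ : ∀ p : {p : ℕ // p.Prime}, @PadicInt p.1 ⟨p.2⟩) (f : Polynomial ℚ) :
    f ∈ RtauSet τ ↔ ∀ p : {p : ℕ // p.Prime},
      letI : Fact p.1.Prime := ⟨p.2⟩
      ‖EV τ p f‖ ≤ 1 := by
  constructor
  · rintro ⟨h, n, hn, heq, hdvd⟩ p
    letI : Fact p.1.Prime := ⟨p.2⟩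
    have hdvd' := hdvd p
    have he : ((n : ℚ) : ℚ_[p.1]) * EV τ p f = ((aeval (τ p) h : ℤ_[p.1]) : ℚ_[p.1]) := by
      rw [← aeval_coe_int, ← heq]
      simp [EV, aeval_C]
    have hnorm : ‖(aeval (τ p) h : ℤ_[p.1])‖ ≤ (p.1 : ℝ) ^ (-(n.factorization p.1 : ℤ)) := by
      rw [PadicInt.norm_le_pow_iff_mem_span_pow, Ideal.mem_span_singleton]
      exact_mod_cast hdvd'
    have := congrArg (‖·‖) he
    simp only [norm_mul] at this
    rw [PadicInt.padic_norm_e_of_padicInt] at this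
    rw [norm_nat_eq n hn] at this
    have hpos : (0:ℝ) < (p.1 : ℝ) ^ (-(n.factorization p.1 : ℤ)) := by
      apply zpow_pos
      exact_mod_cast p.2.pos
    nlinarith [norm_nonneg (EV τ p f), this, hnorm]
  · intro hf
    obtain ⟨n, h, hn, heq⟩ := exists_clear f
    refine ⟨h, n, hn, heq, fun p => ?_⟩
    letI : Fact p.1.Prime := ⟨p.2⟩
    have he : ((n : ℚ) : ℚ_[p.1]) * EV τ p f = ((aeval (τ p) h : ℤ_[p.1]) : ℚ_[p.1]) := by
      rw [← aeval_coe_int, ← heq]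
      simp [EV, aeval_C]
    have : ‖(aeval (τ p) h : ℤ_[p.1])‖ ≤ (p.1 : ℝ) ^ (-(n.factorization p.1 : ℤ)) := by
      rw [PadicInt.norm_def, ← he, norm_mul, norm_nat_eq n hn]
      have := hf p
      have hpos : (0:ℝ) ≤ (p.1 : ℝ) ^ (-(n.factorization p.1 : ℤ)) := by positivity
      nlinarith [norm_nonneg (EV τ p f)]
    rw [PadicInt.norm_le_pow_iff_mem_span_pow, Ideal.mem_span_singleton] at this
    exact_mod_cast this
-- appended to full.lean for testing
lemma EV_bound (τ : ∀ p : {p : ℕ // p.Prime}, @PadicInt p.1 ⟨p.2⟩) (f : Polynomial ℚ) :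
    ∃ n : ℕ, n ≠ 0 ∧ ∀ p : {p : ℕ // p.Prime},
      letI : Fact p.1.Prime := ⟨p.2⟩
      ‖EV τ p f‖ ≤ (p.1 : ℝ) ^ ((n.factorization p.1 : ℤ)) := by
  obtain ⟨n, h, hn, heq⟩ := exists_clear f
  refine ⟨n, hn, fun p => ?_⟩
  letI : Fact p.1.Prime := ⟨p.2⟩
  have he : ((n : ℚ) : ℚ_[p.1]) * EV τ p f = ((aeval (τ p) h : ℤ_[p.1]) : ℚ_[p.1]) := by
    rw [← aeval_coe_int, ← heq]
    simp [EV, aeval_C]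
  have h1 : ‖((aeval (τ p) h : ℤ_[p.1]) : ℚ_[p.1])‖ ≤ 1 := (aeval (τ p) h).2
  have := congrArg (‖·‖) he
  simp only [norm_mul] at this
  rw [norm_nat_eq n hn] at this
  have hpos : (0:ℝ) < (p.1 : ℝ) ^ (-(n.factorization p.1 : ℤ)) := by
    apply zpow_pos; exact_mod_cast p.2.pos
  have hinv : ((p.1:ℝ) ^ ((n.factorization p.1 : ℤ))) = ((p.1:ℝ) ^ (-(n.factorization p.1 : ℤ)))⁻¹ := by
    rw [← zpow_neg, neg_neg]
  rw [hinv]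
  have hle : (p.1:ℝ) ^ (-(n.factorization p.1:ℤ)) * ‖EV τ p f‖ ≤ 1 := this ▸ h1
  calc ‖EV τ p f‖
      = ((p.1:ℝ) ^ (-(n.factorization p.1:ℤ)))⁻¹ * ((p.1:ℝ) ^ (-(n.factorization p.1:ℤ)) * ‖EV τ p f‖) := by
        field_simp
    _ ≤ ((p.1:ℝ) ^ (-(n.factorization p.1:ℤ)))⁻¹ * 1 :=
        mul_le_mul_of_nonneg_left hle (by positivity)
    _ = ((p.1:ℝ) ^ (-(n.factorization p.1:ℤ)))⁻¹ := mul_one _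
lemma exists_c (τ : ∀ p : {p : ℕ // p.Prime}, @PadicInt p.1 ⟨p.2⟩) (f : Polynomial ℚ) :
    ∃ c : ℚ, 0 ≤ c ∧ c < 1 ∧ ∀ p : {p : ℕ // p.Prime},
      letI : Fact p.1.Prime := ⟨p.2⟩
      ‖EV τ p f - ((c : ℚ) : ℚ_[p.1])‖ ≤ 1 := by
  classical
  obtain ⟨n, hn, hbound⟩ := EV_bound τ f
  set S := n.primeFactors with hS
  have hprime : ∀ x : {x // x ∈ S}, x.1.Prime := fun x =>
    Nat.prime_of_mem_primeFactors x.2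
  set P : {x // x ∈ S} → {p : ℕ // p.Prime} := fun x => ⟨x.1, hprime x⟩ with hP
  have hg : ∀ x : {x // x ∈ S}, ∃ a : ℤ,
      letI : Fact x.1.Prime := ⟨hprime x⟩
      ‖EV τ (P x) f - (((a : ℚ) / ((x.1 : ℚ) ^ (n.factorization x.1)) : ℚ) : ℚ_[x.1])‖ ≤ 1 := by
    intro x
    letI : Fact x.1.Prime := ⟨hprime x⟩
    exact approx_rat (EV τ (P x) f) (n.factorization x.1) (hbound (P x))
  choose a ha using hg
  set g : {x // x ∈ S} → ℚ := fun x => (a x : ℚ) / ((x.1 : ℚ) ^ (n.factorization x.1)) with hgdef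
  set c' : ℚ := ∑ x ∈ S.attach, g x with hc'
  have hterm : ∀ q : {p : ℕ // p.Prime},
      letI : Fact q.1.Prime := ⟨q.2⟩
      ∀ x : {x // x ∈ S}, x.1 ≠ q.1 → ‖((g x : ℚ) : ℚ_[q.1])‖ ≤ 1 := by
    intro q
    letI : Fact q.1.Prime := ⟨q.2⟩
    intro x hx
    have hnd : ¬ (q.1 ∣ x.1 ^ (n.factorization x.1)) := by
      intro hdvd
      have := Nat.Prime.dvd_of_dvd_pow q.2 hdvd
      exact hx ((Nat.prime_dvd_prime_iff_eq q.2 (hprime x)).mp this).symm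
    have h := norm_rat_div_le_one (p := q.1) (a x) (x.1 ^ (n.factorization x.1)) hnd
    show ‖((g x : ℚ) : ℚ_[q.1])‖ ≤ 1
    rw [hgdef]
    push_cast at h ⊢
    exact h
  have key : ∀ q : {p : ℕ // p.Prime},
      letI : Fact q.1.Prime := ⟨q.2⟩
      ‖EV τ q f - ((c' : ℚ) : ℚ_[q.1])‖ ≤ 1 := by
    intro q
    letI : Fact q.1.Prime := ⟨q.2⟩
    by_cases hqS : q.1 ∈ S
    · set xq : {x // x ∈ S} := ⟨q.1, hqS⟩ with hxq
      have hsplit : c' = g xq + ∑ x ∈ S.attach.erase xq, g x := by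
        rw [hc', add_comm, Finset.sum_erase_add _ _ (Finset.mem_attach _ _)]
      have hPq : P xq = q := Subtype.ext rfl
      have h1 : ‖EV τ q f - ((g xq : ℚ) : ℚ_[q.1])‖ ≤ 1 := by
        have h := ha xq
        rw [hgdef]
        push_cast at h ⊢
        exact h
      have h2 : ‖((∑ x ∈ S.attach.erase xq, g x : ℚ) : ℚ_[q.1])‖ ≤ 1 := by
        apply norm_rat_sum_le_one
        intro x hx
        have hxne : x.1 ≠ q.1 := fun h =>
          Finset.ne_of_mem_erase hx (Subtype.ext h)
        exact hterm q x hxne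
      have heq2 : EV τ q f - ((c' : ℚ) : ℚ_[q.1]) =
          (EV τ q f - ((g xq : ℚ) : ℚ_[q.1])) - ((∑ x ∈ S.attach.erase xq, g x : ℚ) : ℚ_[q.1]) := by
        rw [hsplit]; push_cast; ring
      rw [heq2]
      exact le_trans (norm_sub_le_max _ _) (max_le h1 h2)
    · have hfz : n.factorization q.1 = 0 := by
        have : q.1 ∉ (n.factorization).support := by
          rwa [Nat.support_factorization]
        exact Finsupp.notMem_support_iff.mp this
      have h0 : ‖EV τ q f‖ ≤ 1 := by
        have := hbound q
        rw [hfz] at this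
        simpa using this
      have h2 : ‖((c' : ℚ) : ℚ_[q.1])‖ ≤ 1 := by
        apply norm_rat_sum_le_one
        intro x _
        exact hterm q x (fun h => hqS (h ▸ x.2))
      exact le_trans (norm_sub_le_max _ _) (max_le h0 h2)
  refine ⟨Int.fract c', Int.fract_nonneg _, Int.fract_lt_one _, fun p => ?_⟩
  letI : Fact p.1.Prime := ⟨p.2⟩
  have heqf : EV τ p f - ((Int.fract c' : ℚ) : ℚ_[p.1]) =
      (EV τ p f - ((c' : ℚ) : ℚ_[p.1])) + ((⌊c'⌋ : ℤ) : ℚ_[p.1]) := by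
    rw [Int.fract]
    push_cast
    ring
  rw [heqf]
  refine le_trans (Padic.nonarchimedean _ _) (max_le (key p) ?_)
  exact Padic.norm_int_le_one _
lemma int_of_norm_le_one (a : ℚ)
    (h : ∀ p : {p : ℕ // p.Prime},
      letI : Fact p.1.Prime := ⟨p.2⟩
      ‖((a : ℚ) : ℚ_[p.1])‖ ≤ 1) : ∃ m : ℤ, a = (m : ℚ) := by
  by_cases hden : a.den = 1
  · exact ⟨a.num, by rw [← Rat.num_div_den a, hden]; push_cast; simp⟩
  obtain ⟨l, lp, ldvd⟩ := Nat.exists_prime_and_dvd hden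
  exfalso
  letI : Fact l.Prime := ⟨lp⟩
  have hn := h ⟨l, lp⟩
  have hdenlt : ‖((a.den : ℤ) : ℚ_[l])‖ < 1 := by
    rw [Padic.norm_intCast_lt_one_iff]
    exact_mod_cast ldvd
  have hden0 : ((a.den : ℤ) : ℚ_[l]) ≠ 0 := by
    exact_mod_cast (Int.natCast_ne_zero.mpr a.den_nz)
  have hdenpos : 0 < ‖((a.den : ℤ) : ℚ_[l])‖ := norm_pos_iff.mpr hden0
  have hnum : ‖((a.num : ℤ) : ℚ_[l])‖ = 1 := by
    refine le_antisymm (Padic.norm_int_le_one _) ?_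
    by_contra hlt
    push_neg at hlt
    rw [Padic.norm_intCast_lt_one_iff] at hlt
    have h1 : l ∣ a.num.natAbs := by
      have := Int.natAbs_dvd_natAbs.mpr hlt
      simpa using this
    have h2 : l ∣ Nat.gcd a.num.natAbs a.den := Nat.dvd_gcd h1 ldvd
    rw [a.reduced] at h2
    exact lp.one_lt.ne' (Nat.dvd_one.mp h2)
  have haeq : ((a : ℚ) : ℚ_[l]) = ((a.num : ℤ) : ℚ_[l]) / ((a.den : ℤ) : ℚ_[l]) := by
    push_cast
    rw [Rat.cast_def]
  rw [haeq, norm_div, hnum] at hn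
  rw [← not_lt] at hn
  apply hn
  rw [lt_div_iff₀ hdenpos, one_mul]
  exact hdenlt

section order
variable {f g : Polynomial ℚ}

lemma lc_add_pos (hf : 0 < f.leadingCoeff) (hg : 0 ≤ g.leadingCoeff) :
    0 < (f + g).leadingCoeff := by
  have hf0 : f ≠ 0 := fun h => by simp [h] at hf
  by_cases hg0 : g = 0
  · simpa [hg0] using hf
  rcases lt_trichotomy f.degree g.degree with h | h | h
  · rw [leadingCoeff_add_of_degree_lt h]
    rcases hg.lt_or_eq with h' | h'
    · exact h'
    · exact absurd h'.symm (leadingCoeff_ne_zero.mpr hg0)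
  · rw [leadingCoeff_add_of_degree_eq h (by positivity)]
    positivity
  · rwa [leadingCoeff_add_of_degree_lt' h]

lemma lc_add_nonneg (hf : 0 ≤ f.leadingCoeff) (hg : 0 ≤ g.leadingCoeff) :
    0 ≤ (f + g).leadingCoeff := by
  by_cases hf0 : f = 0
  · simpa [hf0]
  have : 0 < f.leadingCoeff :=
    lt_of_le_of_ne hf (Ne.symm (leadingCoeff_ne_zero.mpr hf0))
  exact (lc_add_pos this hg).le

lemma eq_C_of_small {d : Polynomial ℚ} (h1 : 0 < (1 - d).leadingCoeff)
    (h2 : 0 < (1 + d).leadingCoeff) : ∃ a : ℚ, d = C a ∧ -1 < a ∧ a < 1 := by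
  have hdeg : d.degree ≤ 0 := by
    by_contra hd
    push_neg at hd
    have hdeg1 : (1 : Polynomial ℚ).degree < (-d).degree := by
      rwa [degree_neg, degree_one]
    have e1 : (1 - d).leadingCoeff = -d.leadingCoeff := by
      rw [sub_eq_add_neg, leadingCoeff_add_of_degree_lt hdeg1, leadingCoeff_neg]
    have e2 : (1 + d).leadingCoeff = d.leadingCoeff := by
      rw [leadingCoeff_add_of_degree_lt (by rwa [degree_one])]
    rw [e1] at h1; rw [e2] at h2
    linarith
  refine ⟨d.coeff 0, eq_C_of_degree_le_zero hdeg, ?_, ?_⟩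
  · have : (1 + d) = C (1 + d.coeff 0) := by
      conv_lhs => rw [eq_C_of_degree_le_zero hdeg]
      rw [← C_1, ← C_add]
    rw [this, leadingCoeff_C] at h2
    linarith
  · have : (1 - d) = C (1 - d.coeff 0) := by
      conv_lhs => rw [eq_C_of_degree_le_zero hdeg]
      rw [← C_1, ← C_sub]
    rw [this, leadingCoeff_C] at h1
    linarith
end order
lemma mem_zero_Rtau (τ : ∀ p : {p : ℕ // p.Prime}, @PadicInt p.1 ⟨p.2⟩) :
    (0 : Polynomial ℚ) ∈ RtauSet τ := by
  rw [mem_RtauSet_iff]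
  intro p
  letI : Fact p.1.Prime := ⟨p.2⟩
  simp [EV]

lemma mem_sub_mul_Rtau (τ : ∀ p : {p : ℕ // p.Prime}, @PadicInt p.1 ⟨p.2⟩)
    {q pp r : Polynomial ℚ} (hq : q ∈ RtauSet τ) (hp : pp ∈ RtauSet τ)
    (hr : r ∈ RtauSet τ) : q - pp * r ∈ RtauSet τ := by
  rw [mem_RtauSet_iff] at *
  intro p
  letI : Fact p.1.Prime := ⟨p.2⟩
  have he : EV τ p (q - pp * r) = EV τ p q - EV τ p pp * EV τ p r := by
    simp [EV]
  rw [he]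
  refine le_trans (norm_sub_le_max _ _) (max_le (hq p) ?_)
  rw [norm_mul]
  calc ‖EV τ p pp‖ * ‖EV τ p r‖ ≤ 1 * 1 :=
        mul_le_mul (hp p) (hr p) (norm_nonneg _) zero_le_one
    _ = 1 := one_mul 1

lemma mem_sub_Rtau (τ : ∀ p : {p : ℕ // p.Prime}, @PadicInt p.1 ⟨p.2⟩)
    {f g : Polynomial ℚ} (hf : f ∈ RtauSet τ) (hg : g ∈ RtauSet τ) :
    f - g ∈ RtauSet τ := by
  have h1 : (1 : Polynomial ℚ) ∈ RtauSet τ := by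
    rw [mem_RtauSet_iff]; intro p
    letI : Fact p.1.Prime := ⟨p.2⟩
    simp [EV]
  have := mem_sub_mul_Rtau τ hf hg h1
  simpa using this

lemma mem_shift_Rtau (τ : ∀ p : {p : ℕ // p.Prime}, @PadicInt p.1 ⟨p.2⟩)
    {f : Polynomial ℚ} {c : ℚ}
    (hc : ∀ p : {p : ℕ // p.Prime},
      letI : Fact p.1.Prime := ⟨p.2⟩
      ‖EV τ p f - ((c : ℚ) : ℚ_[p.1])‖ ≤ 1) (m : ℤ) :
    f - C (c + m) ∈ RtauSet τ := by
  rw [mem_RtauSet_iff]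
  intro p
  letI : Fact p.1.Prime := ⟨p.2⟩
  have he : EV τ p (f - C (c + m)) =
      (EV τ p f - ((c : ℚ) : ℚ_[p.1])) - ((m : ℤ) : ℚ_[p.1]) := by
    simp [EV, aeval_C]
    ring
  rw [he]
  refine le_trans (norm_sub_le_max _ _) (max_le (hc p) ?_)
  exact Padic.norm_int_le_one _

lemma const_int_Rtau (τ : ∀ p : {p : ℕ // p.Prime}, @PadicInt p.1 ⟨p.2⟩)
    {a : ℚ} (h : C a ∈ RtauSet τ) : ∃ m : ℤ, a = (m : ℚ) := by
  rw [mem_RtauSet_iff] at h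
  apply int_of_norm_le_one
  intro p
  letI : Fact p.1.Prime := ⟨p.2⟩
  have := h p
  have he : EV τ p (C a) = ((a : ℚ) : ℚ_[p.1]) := by simp [EV, aeval_C]
  rwa [he] at this
/-- In the ordering of `R_τ` by sign of the leading coefficient, division with remainder
is possible and unique within the positive cone: for `q, r ≥ 0` with `r ≠ 0` there are
unique `p, s ≥ 0` in `R_τ` with `q = p * r + s` and `s < r`. -/
theorem stmt_12 (τ : ∀ p : {p : ℕ // p.Prime}, @PadicInt p.1 ⟨p.2⟩)
    (q r : Polynomial ℚ) (hq : q ∈ RtauSet τ) (hr : r ∈ RtauSet τ)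
    (hq0 : 0 ≤ q.leadingCoeff) (hr0 : 0 < r.leadingCoeff) :
    ∃! z : Polynomial ℚ × Polynomial ℚ,
      z.1 ∈ RtauSet τ ∧ z.2 ∈ RtauSet τ ∧
      0 ≤ z.1.leadingCoeff ∧ 0 ≤ z.2.leadingCoeff ∧
      q = z.1 * r + z.2 ∧ 0 < (r - z.2).leadingCoeff := by
  have hrne : r ≠ 0 := leadingCoeff_ne_zero.mp (ne_of_gt hr0)
  set p₀ : Polynomial ℚ := q / r with hp₀
  set s₀ : Polynomial ℚ := q % r with hs₀
  have hq_eq : q = p₀ * r + s₀ := by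
    rw [hp₀, hs₀, mul_comm]
    exact (EuclideanDomain.div_add_mod q r).symm
  have hsd : s₀.degree < r.degree := EuclideanDomain.mod_lt q hrne
  have lc_sub_small : ∀ f : Polynomial ℚ, f.degree < r.degree →
      (r - f).leadingCoeff = r.leadingCoeff := by
    intro f hf
    rw [sub_eq_add_neg, leadingCoeff_add_of_degree_lt' (by rwa [degree_neg])]
  have deg_Cr : ∀ e : ℚ, e ≠ 0 → (C e * r).degree = r.degree := by
    intro e he
    rw [degree_mul, degree_C he, zero_add]
  have lc_s2 : ∀ e : ℚ, e ≠ 0 → (s₀ + C e * r).leadingCoeff = e * r.leadingCoeff := by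
    intro e he
    rw [leadingCoeff_add_of_degree_lt (by rw [deg_Cr e he]; exact hsd),
      leadingCoeff_mul, leadingCoeff_C]
  have lc_rs2 : ∀ e : ℚ, e ≠ 1 →
      (r - (s₀ + C e * r)).leadingCoeff = (1 - e) * r.leadingCoeff := by
    intro e he
    have h1 : r - (s₀ + C e * r) = C (1 - e) * r - s₀ := by
      rw [C_sub, C_1]; ring
    have he' : (1 : ℚ) - e ≠ 0 := sub_ne_zero.mpr (Ne.symm he)
    rw [h1, sub_eq_add_neg, leadingCoeff_add_of_degree_lt'
      (by rw [degree_neg, deg_Cr _ he']; exact hsd), leadingCoeff_mul, leadingCoeff_C]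
  obtain ⟨c, hc0, hc1, hc⟩ := exists_c τ p₀
  have memz1 : ∀ m : ℤ, p₀ - C (c + m) ∈ RtauSet τ := mem_shift_Rtau τ hc
  have memz1c : p₀ - C c ∈ RtauSet τ := by
    have := memz1 0
    simpa using this
  have hgen : ∀ e : ℚ, (p₀ - C e ∈ RtauSet τ) → 0 ≤ (p₀ - C e).leadingCoeff →
      0 ≤ (s₀ + C e * r).leadingCoeff → 0 < (r - (s₀ + C e * r)).leadingCoeff →
      ∃ z : Polynomial ℚ × Polynomial ℚ, z.1 ∈ RtauSet τ ∧ z.2 ∈ RtauSet τ ∧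
        0 ≤ z.1.leadingCoeff ∧ 0 ≤ z.2.leadingCoeff ∧
        q = z.1 * r + z.2 ∧ 0 < (r - z.2).leadingCoeff := by
    intro e h1 h2 h3 h4
    have hz2e : q - (p₀ - C e) * r = s₀ + C e * r := by
      linear_combination hq_eq
    refine ⟨⟨p₀ - C e, q - (p₀ - C e) * r⟩, h1, mem_sub_mul_Rtau τ hq h1 hr,
      h2, ?_, by ring, ?_⟩
    · rw [hz2e]; exact h3
    · rw [hz2e]; exact h4
  have hex : ∃ z : Polynomial ℚ × Polynomial ℚ, z.1 ∈ RtauSet τ ∧ z.2 ∈ RtauSet τ ∧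
      0 ≤ z.1.leadingCoeff ∧ 0 ≤ z.2.leadingCoeff ∧
      q = z.1 * r + z.2 ∧ 0 < (r - z.2).leadingCoeff := by
    by_cases hP0 : p₀ = 0
    · refine ⟨⟨0, q⟩, mem_zero_Rtau τ, hq, by simp, hq0, by ring, ?_⟩
      have hq' : q = s₀ := by
        rw [hP0] at hq_eq; simpa using hq_eq
      rw [hq', lc_sub_small s₀ hsd]
      exact hr0
    · have hdegmul : s₀.degree < (p₀ * r).degree := by
        rw [degree_mul]
        calc s₀.degree < r.degree := hsd
          _ = 0 + r.degree := (zero_add _).symm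
          _ ≤ p₀.degree + r.degree :=
            add_le_add_left (zero_le_degree_iff.mpr hP0) _
      have hlcq : q.leadingCoeff = p₀.leadingCoeff * r.leadingCoeff := by
        rw [hq_eq, leadingCoeff_add_of_degree_lt' hdegmul, leadingCoeff_mul]
      have hplc : 0 < p₀.leadingCoeff := by
        have hne : p₀.leadingCoeff ≠ 0 := leadingCoeff_ne_zero.mpr hP0
        rcases hne.lt_or_gt with h | h
        · exfalso; nlinarith
        · exact h
      have lcz1_deg : 0 < p₀.degree → ∀ e : ℚ,
          (p₀ - C e).leadingCoeff = p₀.leadingCoeff := by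
        intro hd e
        rw [sub_eq_add_neg, leadingCoeff_add_of_degree_lt']
        calc (-C e).degree = (C e).degree := degree_neg _
          _ ≤ 0 := degree_C_le
          _ < p₀.degree := hd
      by_cases hdeg1 : 0 < p₀.degree
      · by_cases hcz : c = 0
        · by_cases hs0 : 0 ≤ s₀.leadingCoeff
          · refine hgen 0 ?_ ?_ ?_ ?_
            · rw [← hcz]; exact memz1c
            · rw [lcz1_deg hdeg1]; exact hplc.le
            · simpa using hs0
            · rw [lc_rs2 0 (by norm_num)]; simpa using hr0
          · push_neg at hs0
            refine hgen 1 ?_ ?_ ?_ ?_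
            · have := memz1 1
              rw [hcz] at this
              simpa using this
            · rw [lcz1_deg hdeg1]; exact hplc.le
            · rw [lc_s2 1 one_ne_zero]; nlinarith
            · have h1 : r - (s₀ + C 1 * r) = -s₀ := by rw [C_1]; ring
              rw [h1, leadingCoeff_neg]
              linarith
        · have hcpos : 0 < c := lt_of_le_of_ne hc0 (Ne.symm hcz)
          refine hgen c memz1c ?_ ?_ ?_
          · rw [lcz1_deg hdeg1]; exact hplc.le
          · rw [lc_s2 c hcz]; positivity
          · rw [lc_rs2 c (ne_of_lt hc1)]
            have : (0:ℚ) < 1 - c := by linarith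
            positivity
      · push_neg at hdeg1
        set a : ℚ := p₀.coeff 0 with haa
        have hpa : p₀ = C a := eq_C_of_degree_le_zero hdeg1
        have ha : 0 < a := by
          rw [hpa, leadingCoeff_C] at hplc
          exact hplc
        have lcz1_const : ∀ e : ℚ, (p₀ - C e).leadingCoeff = a - e := by
          intro e
          rw [hpa, ← C_sub, leadingCoeff_C]
        by_cases hac : c ≤ a
        · by_cases hcz : c = 0
          · by_cases hs0 : 0 ≤ s₀.leadingCoeff
            · refine hgen 0 ?_ ?_ ?_ ?_
              · rw [← hcz]; exact memz1c
              · rw [lcz1_const]; linarith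
              · simpa using hs0
              · rw [lc_rs2 0 (by norm_num)]; simpa using hr0
            · push_neg at hs0
              have hmem : p₀ ∈ RtauSet τ := by
                have := memz1c
                rw [hcz] at this
                simpa using this
              have hCa : C a ∈ RtauSet τ := by rwa [hpa] at hmem
              obtain ⟨m, hm⟩ := const_int_Rtau τ hCa
              have hm1 : (1:ℚ) ≤ a := by
                have : 0 < m := by exact_mod_cast hm ▸ ha
                have : (1:ℤ) ≤ m := this
                calc (1:ℚ) ≤ (m:ℚ) := by exact_mod_cast this
                  _ = a := hm.symm
              refine hgen 1 ?_ ?_ ?_ ?_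
              · have := memz1 1
                rw [hcz] at this
                simpa using this
              · rw [lcz1_const]; linarith
              · rw [lc_s2 1 one_ne_zero]; nlinarith
              · have h1 : r - (s₀ + C 1 * r) = -s₀ := by rw [C_1]; ring
                rw [h1, leadingCoeff_neg]
                linarith
          · have hcpos : 0 < c := lt_of_le_of_ne hc0 (Ne.symm hcz)
            refine hgen c memz1c ?_ ?_ ?_
            · rw [lcz1_const]; linarith
            · rw [lc_s2 c hcz]; positivity
            · rw [lc_rs2 c (ne_of_lt hc1)]
              have : (0:ℚ) < 1 - c := by linarith
              positivity
        · push_neg at hac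
          have ha1 : a < 1 := lt_trans hac hc1
          refine ⟨⟨0, q⟩, mem_zero_Rtau τ, hq, by simp, hq0, by ring, ?_⟩
          have hq' : q = s₀ + C a * r := by
            rw [hq_eq, hpa]; ring
          rw [hq', lc_rs2 a (ne_of_lt ha1)]
          have : (0:ℚ) < 1 - a := by linarith
          positivity
  refine existsUnique_of_exists_of_unique hex ?_
  rintro ⟨pa, sa⟩ ⟨pb, sb⟩ ⟨hpaR, hsaR, hpa0, hsa0, hqa, hra⟩
    ⟨hpbR, hsbR, hpb0, hsb0, hqb, hrb⟩
  have hzz : (pa - pb) * r = sb - sa := by linear_combination hqb - hqa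
  have k1 : 0 < ((1 - (pa - pb)) * r).leadingCoeff := by
    have h : (1 - (pa - pb)) * r = (r - sb) + sa := by linear_combination -hzz
    rw [h]; exact lc_add_pos hrb hsa0
  have k2 : 0 < ((1 + (pa - pb)) * r).leadingCoeff := by
    have h : (1 + (pa - pb)) * r = (r - sa) + sb := by linear_combination hzz
    rw [h]; exact lc_add_pos hra hsb0
  rw [leadingCoeff_mul] at k1 k2
  have hd1 : 0 < (1 - (pa - pb)).leadingCoeff := by
    by_contra hle; push_neg at hle; nlinarith
  have hd2 : 0 < (1 + (pa - pb)).leadingCoeff := by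
    by_contra hle; push_neg at hle; nlinarith
  obtain ⟨w, hdw, hw1, hw2⟩ := eq_C_of_small hd1 hd2
  have hdR : pa - pb ∈ RtauSet τ := mem_sub_Rtau τ hpaR hpbR
  rw [hdw] at hdR
  obtain ⟨m, hm⟩ := const_int_Rtau τ hdR
  have hm0 : m = 0 := by
    rw [hm] at hw1 hw2
    have h1 : -1 < m := by exact_mod_cast hw1
    have h2 : m < 1 := by exact_mod_cast hw2
    omega
  have hd0 : pa - pb = 0 := by
    rw [hdw, hm, hm0]
    simp
  have hpe : pa = pb := sub_eq_zero.mp hd0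
  have hse : sa = sb := by
    have h1 := hqa
    rw [hpe] at h1
    exact add_left_cancel (h1.symm.trans hqb)
  exact Prod.ext hpe hse
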